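/- Let Λ_c be a noncentral chi-squared random variable with p_c degrees of freedom and noncentrality parameter λ_c (i.e., Λ_c = ∑_{i=1}^{p_c}(Z_i+μ_i)² with Z_i i.i.d. standard Gaussian and ‖μ‖² = λ_c). Let N ≥ 1, let P^D_1,…,P^D_N ∈ (0,1] with P^D_min = min_i P^D_i > 0, and let τ_c satisfy τ_c ≥ p_c + λ_c + √(4(p_c + 2λ_c)·ln(1/(1 − (1 − P^D_min)^N))) + 2·ln(1/(1 − (1 − P^D_min)^N)). Then 1 − ∏_{i=1}^N (1 − P^D_i) ≥ Pr[Λ_c ≥ τ_c]; that is, the decentralized detection probability P^D_d = 1 − ∏_{i=1}^N (1 − P^D_i) is at least the centralized detection probability P^D_c = Q(τ_c; p_c, λ_c). -/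

import Mathlib

open MeasureTheory ProbabilityTheory
open Real NNReal ENNReal


lemma aux_neg_log_le {u : ℝ} (h0 : 0 < u) (h1 : u ≤ 1) :
    -Real.log u ≤ (1 - u) + (1 - u) ^ 2 / (2 * u) := by
  set w : ℝ := (1 - u) ^ 2 / (2 * u) with hwdef
  have hw : w * (2 * u) = (1 - u) ^ 2 := div_mul_cancel₀ _ (by positivity)
  have hwnn : 0 ≤ w := by positivity
  set g : ℝ := (1 - u) + w with hg
  have hgnn : 0 ≤ g := by nlinarith
  have hkey : 1 / u ≤ 1 + g + g ^ 2 / 2 := by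
    rw [div_le_iff₀ h0, hg]
    nlinarith [hw, mul_nonneg h0.le (sq_nonneg w), sq_nonneg (1 - u)]
  have hexp : 1 + g + g ^ 2 / 2 ≤ Real.exp g := Real.quadratic_le_exp_of_nonneg hgnn
  have : Real.log (1 / u) ≤ g := by
    rw [Real.log_le_iff_le_exp (by positivity)]
    linarith
  rwa [one_div, Real.log_inv] at this


lemma aux_gaussian_exp_sq (t c : ℝ) (ht : t < 1/2) :
    Integrable (fun x => Real.exp (t * (x + c) ^ 2)) (gaussianReal 0 1) ∧
    ∫ x, Real.exp (t * (x + c) ^ 2) ∂(gaussianReal 0 1)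
      = (Real.sqrt (1 - 2*t))⁻¹ * Real.exp (t * c ^ 2 / (1 - 2*t)) := by
  obtain ⟨b, hbdef⟩ : ∃ b : ℝ, b = 1/2 - t := ⟨_, rfl⟩
  obtain ⟨d, hd⟩ : ∃ d : ℝ, d = t * c / b := ⟨_, rfl⟩
  have hb : (0:ℝ) < b := by rw [hbdef]; linarith
  have hbne : b ≠ 0 := ne_of_gt hb
  have h12 : (1:ℝ) - 2*t = 2*b := by rw [hbdef]; ring
  have h12pos : (0:ℝ) < 1 - 2*t := by rw [h12]; linarith
  have h12ne : (1:ℝ) - 2*t ≠ 0 := ne_of_gt h12pos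
  -- pointwise identity
  have key : ∀ x : ℝ, gaussianPDFReal 0 1 x * Real.exp (t * (x + c) ^ 2)
      = ((Real.sqrt (2 * π))⁻¹ * Real.exp (t * c ^ 2 / (1 - 2*t))) * Real.exp (-b * (x - d) ^ 2) := by
    intro x
    rw [gaussianPDFReal]
    simp only [NNReal.coe_one, mul_one, sub_zero]
    rw [mul_assoc, ← Real.exp_add, mul_assoc, ← Real.exp_add]
    congr 2
    subst hd
    subst hbdef
    have h : (1:ℝ)/2 - t ≠ 0 := by linarith
    field_simp
    ring
  -- the Gaussian measure as withDensity
  have hrepr : gaussianReal 0 1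
      = volume.withDensity (fun x => ((Real.toNNReal (gaussianPDFReal 0 1 x) : ℝ≥0) : ℝ≥0∞)) := by
    rw [gaussianReal_of_var_ne_zero _ one_ne_zero]
    rfl
  have hfmeas : Measurable (fun x => Real.toNNReal (gaussianPDFReal 0 1 x)) :=
    (measurable_gaussianPDFReal 0 1).real_toNNReal
  have hsmul : ∀ x : ℝ, ((Real.toNNReal (gaussianPDFReal 0 1 x) : ℝ≥0) : ℝ) • Real.exp (t * (x + c) ^ 2)
      = ((Real.sqrt (2 * π))⁻¹ * Real.exp (t * c ^ 2 / (1 - 2*t))) * Real.exp (-b * (x - d) ^ 2) := by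
    intro x
    rw [smul_eq_mul, Real.coe_toNNReal _ (gaussianPDFReal_nonneg 0 1 x), key x]
  have hint_shift : Integrable (fun x => Real.exp (-b * (x - d) ^ 2)) volume :=
    Integrable.comp_sub_right (integrable_exp_neg_mul_sq hb) d
  constructor
  · rw [hrepr, integrable_withDensity_iff_integrable_smul hfmeas]
    exact Integrable.congr
      (hint_shift.const_mul ((Real.sqrt (2 * π))⁻¹ * Real.exp (t * c ^ 2 / (1 - 2*t))))
      (Filter.Eventually.of_forall fun x => (hsmul x).symm)
  · rw [hrepr, integral_withDensity_eq_integral_smul hfmeas]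
    calc ∫ x, ((Real.toNNReal (gaussianPDFReal 0 1 x) : ℝ≥0) : ℝ) • Real.exp (t * (x + c) ^ 2)
        = ∫ x, ((Real.sqrt (2 * π))⁻¹ * Real.exp (t * c ^ 2 / (1 - 2*t))) * Real.exp (-b * (x - d) ^ 2) :=
          integral_congr_ae (Filter.Eventually.of_forall hsmul)
      _ = ((Real.sqrt (2 * π))⁻¹ * Real.exp (t * c ^ 2 / (1 - 2*t))) * ∫ x, Real.exp (-b * (x - d) ^ 2) :=
          integral_const_mul _ _
      _ = ((Real.sqrt (2 * π))⁻¹ * Real.exp (t * c ^ 2 / (1 - 2*t))) * Real.sqrt (π / b) := by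
          rw [integral_sub_right_eq_self (fun x => Real.exp (-b * x ^ 2)) d, integral_gaussian]
      _ = (Real.sqrt (1 - 2*t))⁻¹ * Real.exp (t * c ^ 2 / (1 - 2*t)) := by
          have hpib : π / b = (2 * π) / (1 - 2*t) := by
            rw [h12]; field_simp
          rw [hpib, Real.sqrt_div (by positivity : (0:ℝ) ≤ 2*π)]
          have h2πpos : (0:ℝ) < Real.sqrt (2*π) := Real.sqrt_pos.mpr (by positivity)
          field_simp

set_option maxHeartbeats 1000000 in
/-- Theorem 2 of the paper: sufficient condition for `P^D_d ≥ P^D_c`.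
Let `Λ_c` be noncentral chi-squared with `p_c` degrees of freedom and noncentrality
`λ_c` (realized as `∑ (Z i + μ i)²` with `Z i` i.i.d. standard Gaussians, `λ_c = ‖μ‖²`).
If `τ_c ≥ p_c + λ_c + √(4 (p_c + 2 λ_c) ln(1/(1 − (1 − P^D_min)^N)))
+ 2 ln(1/(1 − (1 − P^D_min)^N))`, then the decentralized detection probability
`1 − ∏ i (1 − P^D i)` is at least the centralized one, `Pr[Λ_c ≥ τ_c]`. -/
theorem decentralized_outperforms_centralized
    {Ω : Type*} [MeasurableSpace Ω] (P : Measure Ω) [IsProbabilityMeasure P]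
    {pc : ℕ} (Z : Fin pc → Ω → ℝ) (hZmeas : ∀ i, Measurable (Z i))
    (hZindep : iIndepFun Z P)
    (hZ : ∀ i, P.map (Z i) = gaussianReal 0 1)
    (μ : Fin pc → ℝ) (lamc : ℝ) (hlamc : lamc = ∑ i, (μ i) ^ 2)
    {N : ℕ} (hN : 1 ≤ N) (PD : Fin N → ℝ)
    (hPD : ∀ i, 0 < PD i ∧ PD i ≤ 1)
    (PDmin : ℝ) (hPDmin : IsLeast (Set.range PD) PDmin)
    (τc : ℝ)
    (hτc : pc + lamc +
        Real.sqrt (4 * (pc + 2 * lamc) * Real.log (1 / (1 - (1 - PDmin) ^ N))) +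
        2 * Real.log (1 / (1 - (1 - PDmin) ^ N)) ≤ τc) :
    (P {ω | τc ≤ ∑ i, (Z i ω + μ i) ^ 2}).toReal ≤ 1 - ∏ i, (1 - PD i) := by
  classical
  obtain ⟨⟨i0, hi0⟩, hlb⟩ := hPDmin
  have hPDmin_pos : 0 < PDmin := hi0 ▸ (hPD i0).1
  have hPDmin_le1 : PDmin ≤ 1 := hi0 ▸ (hPD i0).2
  have hq0 : (0:ℝ) ≤ (1 - PDmin) ^ N := pow_nonneg (by linarith) N
  have hq1 : (1 - PDmin) ^ N < 1 :=
    pow_lt_one₀ (by linarith) (by linarith) (Nat.one_le_iff_ne_zero.mp hN)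
  have hprod : ∏ i, (1 - PD i) ≤ (1 - PDmin) ^ N := by
    calc ∏ i, (1 - PD i) ≤ ∏ _i : Fin N, (1 - PDmin) :=
          Finset.prod_le_prod (fun i _ => by linarith [(hPD i).2])
            (fun i _ => by have := hlb (Set.mem_range_self i); linarith)
      _ = (1 - PDmin) ^ N := by
          rw [Finset.prod_const, Finset.card_univ, Fintype.card_fin]
  have h1q : (0:ℝ) < 1 - (1 - PDmin) ^ N := by linarith
  obtain ⟨x, hxdef⟩ : ∃ x : ℝ, x = Real.log (1 / (1 - (1 - PDmin) ^ N)) := ⟨_, rfl⟩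
  rw [← hxdef] at hτc
  have hx0 : 0 ≤ x := by
    rw [hxdef]
    exact Real.log_nonneg (by rw [le_div_iff₀ h1q]; linarith)
  have hexpx : Real.exp (-x) = 1 - (1 - PDmin) ^ N := by
    rw [hxdef, one_div, Real.log_inv, neg_neg, Real.exp_log h1q]
  suffices h : (P {ω | τc ≤ ∑ i, (Z i ω + μ i) ^ 2}).toReal ≤ Real.exp (-x) by
    rw [hexpx] at h; linarith
  rcases hx0.eq_or_lt with hx | hx
  · -- x = 0 : probability ≤ 1 = exp 0
    rw [← hx, neg_zero, Real.exp_zero]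
    calc (P {ω | τc ≤ ∑ i, (Z i ω + μ i) ^ 2}).toReal
        ≤ (P Set.univ).toReal :=
          ENNReal.toReal_mono (measure_ne_top P _) (measure_mono (Set.subset_univ _))
      _ = 1 := by simp
  -- main case : x > 0
  have hlam0 : 0 ≤ lamc := hlamc ▸ Finset.sum_nonneg (fun i _ => sq_nonneg _)
  have ha0 : (0:ℝ) ≤ (pc:ℝ) + 2 * lamc := by positivity
  have hsqrt4 : Real.sqrt (4 * ((pc:ℝ) + 2 * lamc) * x)
      = 2 * (Real.sqrt ((pc:ℝ) + 2 * lamc) * Real.sqrt x) := by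
    rw [show (4:ℝ) * ((pc:ℝ) + 2 * lamc) * x = 2^2 * (((pc:ℝ) + 2*lamc) * x) by ring,
      Real.sqrt_mul (by positivity), Real.sqrt_sq (by norm_num : (0:ℝ) ≤ 2),
      Real.sqrt_mul ha0]
  have hτc' : (pc:ℝ) + lamc + 2 * (Real.sqrt ((pc:ℝ) + 2*lamc) * Real.sqrt x) + 2 * x ≤ τc := by
    rw [← hsqrt4]; exact hτc
  rcases ha0.eq_or_lt with ha | ha
  · -- degenerate case : pc = 0 and lamc = 0
    have hpcR : (pc:ℝ) = 0 := by nlinarith [Nat.cast_nonneg (α := ℝ) pc]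
    have hpc0 : pc = 0 := by exact_mod_cast hpcR
    have hlamc0 : lamc = 0 := by nlinarith [Nat.cast_nonneg (α := ℝ) pc]
    have hτpos : 0 < τc := by
      have hs := Real.sqrt_nonneg ((pc:ℝ) + 2*lamc)
      have hs2 := Real.sqrt_nonneg x
      nlinarith
    have hset : {ω : Ω | τc ≤ ∑ i, (Z i ω + μ i) ^ 2} = ∅ := by
      ext ω
      simp only [Set.mem_setOf_eq, Set.mem_empty_iff_false, iff_false, not_le]
      have : ∑ i, (Z i ω + μ i) ^ 2 = 0 := by
        haveI : IsEmpty (Fin pc) := by rw [hpc0]; exact Fin.isEmpty'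
        simp
      rw [this]; exact hτpos
    rw [hset]
    simp [Real.exp_nonneg]
  -- Chernoff case
  obtain ⟨s, hsdef⟩ : ∃ s : ℝ, s = Real.sqrt ((pc:ℝ) + 2*lamc) := ⟨_, rfl⟩
  obtain ⟨r, hrdef⟩ : ∃ r : ℝ, r = Real.sqrt x := ⟨_, rfl⟩
  have hs : 0 < s := hsdef ▸ Real.sqrt_pos.mpr ha
  have hr : 0 < r := hrdef ▸ Real.sqrt_pos.mpr hx
  have hs2 : s ^ 2 = (pc:ℝ) + 2*lamc := by rw [hsdef, Real.sq_sqrt ha0]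
  have hr2 : r ^ 2 = x := by rw [hrdef, Real.sq_sqrt hx0]
  have hD : (0:ℝ) < s + 2*r := by linarith
  obtain ⟨t, htdef⟩ : ∃ t : ℝ, t = r / (s + 2*r) := ⟨_, rfl⟩
  have ht0 : 0 < t := htdef ▸ div_pos hr hD
  have ht : t < 1/2 := by rw [htdef, div_lt_iff₀ hD]; linarith
  have hu : 1 - 2*t = s / (s + 2*r) := by
    rw [htdef]; field_simp; ring
  have hupos : (0:ℝ) < 1 - 2*t := by rw [hu]; positivity
  have hule : 1 - 2*t ≤ 1 := by linarith
  -- the independent squared variables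
  set X : Fin pc → Ω → ℝ := fun i ω => (Z i ω + μ i) ^ 2 with hX
  have hgm : ∀ i : Fin pc, Measurable (fun y : ℝ => Real.exp (t * (y + μ i) ^ 2)) := by
    intro i; fun_prop
  have hXmeas : ∀ i, Measurable (X i) := fun i => ((hZmeas i).add_const (μ i)).pow_const 2
  have hXindep : iIndepFun X P :=
    hZindep.comp (fun i y => (y + μ i) ^ 2)
      (fun i => (measurable_id.add_const (μ i)).pow_const 2)
  have hint : ∀ i, Integrable (fun ω => Real.exp (t * X i ω)) P := by
    intro i
    have h1 : Integrable (fun y : ℝ => Real.exp (t * (y + μ i) ^ 2)) (P.map (Z i)) := by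
      rw [hZ i]; exact (aux_gaussian_exp_sq t (μ i) ht).1
    exact (integrable_map_measure ((hgm i).aestronglyMeasurable) (hZmeas i).aemeasurable).mp h1
  have hmgf : ∀ i, mgf (X i) P t
      = (Real.sqrt (1 - 2*t))⁻¹ * Real.exp (t * (μ i) ^ 2 / (1 - 2*t)) := by
    intro i
    have h1 : mgf (X i) P t = ∫ y, Real.exp (t * (y + μ i) ^ 2) ∂(P.map (Z i)) := by
      rw [integral_map (hZmeas i).aemeasurable ((hgm i).aestronglyMeasurable)]
      rfl
    rw [h1, hZ i, (aux_gaussian_exp_sq t (μ i) ht).2]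
  have hintsum : Integrable (fun ω => Real.exp (t * (∑ i, X i) ω)) P :=
    hXindep.integrable_exp_mul_sum hXmeas (fun i _ => hint i)
  have hchern := measure_ge_le_exp_mul_mgf (X := ∑ i, X i) (μ := P) (t := t) τc ht0.le hintsum
  have hsetEq : {ω : Ω | τc ≤ ∑ i, (Z i ω + μ i) ^ 2} = {ω : Ω | τc ≤ (∑ i, X i) ω} := by
    ext ω; simp [Finset.sum_apply, hX]
  rw [hsetEq]
  refine hchern.trans ?_
  -- compute the mgf of the sum
  have hmgfsum : mgf (∑ i, X i) P t
      = ((Real.sqrt (1 - 2*t))⁻¹) ^ pc * Real.exp (t * lamc / (1 - 2*t)) := by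
    rw [hXindep.mgf_sum hXmeas]
    calc ∏ i, mgf (X i) P t
        = ∏ i, ((Real.sqrt (1 - 2*t))⁻¹ * Real.exp (t * (μ i) ^ 2 / (1 - 2*t))) :=
          Finset.prod_congr rfl (fun i _ => hmgf i)
      _ = ((Real.sqrt (1 - 2*t))⁻¹) ^ pc * Real.exp (∑ i, t * (μ i) ^ 2 / (1 - 2*t)) := by
          rw [Finset.prod_mul_distrib, Finset.prod_const, Finset.card_univ, Fintype.card_fin,
            Real.exp_sum]
      _ = ((Real.sqrt (1 - 2*t))⁻¹) ^ pc * Real.exp (t * lamc / (1 - 2*t)) := by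
          congr 1
          rw [hlamc, Finset.mul_sum, Finset.sum_div]
  rw [hmgfsum]
  -- rewrite everything as a single exponential
  have hsqrtu : (Real.sqrt (1 - 2*t))⁻¹ = Real.exp (-(Real.log (1 - 2*t) / 2)) := by
    rw [← Real.log_sqrt hupos.le, Real.exp_neg, Real.exp_log (Real.sqrt_pos.mpr hupos)]
  have hpow : ((Real.sqrt (1 - 2*t))⁻¹) ^ pc
      = Real.exp ((pc:ℝ) * (-(Real.log (1 - 2*t) / 2))) := by
    rw [hsqrtu, Real.exp_nat_mul]
  rw [hpow, ← Real.exp_add, ← Real.exp_add, Real.exp_le_exp]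
  -- the exponent inequality
  have hune : (1 - 2*t) ≠ 0 := ne_of_gt hupos
  have f1 : -Real.log (1 - 2*t) ≤ 2*t + 2 * (t^2 / (1 - 2*t)) := by
    have := aux_neg_log_le hupos hule
    have h2 : (1 - (1 - 2*t)) = 2*t := by ring
    rw [h2] at this
    have h3 : (2*t)^2 / (2*(1 - 2*t)) = 2 * (t^2/(1 - 2*t)) := by
      field_simp
    linarith [h3 ▸ this]
  have i6 : t * lamc / (1 - 2*t) = t * lamc + 2 * lamc * (t^2 / (1 - 2*t)) := by
    linear_combination (t * lamc) * mul_inv_cancel₀ hune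
  have f5 : ((pc:ℝ) + 2*lamc) * (t^2 / (1 - 2*t)) = 2*t*(s*r) + 2*t*x - x := by
    rw [hu, htdef, ← hs2, ← hr2]
    field_simp
    ring
  have m1 : (pc:ℝ) * (-(Real.log (1 - 2*t) / 2))
      ≤ (pc:ℝ)/2 * (2*t + 2*(t^2/(1 - 2*t))) := by
    have := mul_le_mul_of_nonneg_left f1 (by positivity : (0:ℝ) ≤ (pc:ℝ)/2)
    linarith
  have m2 : t * ((pc:ℝ) + lamc + 2*(s*r) + 2*x) ≤ t * τc := by
    apply mul_le_mul_of_nonneg_left _ ht0.le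
    rw [hsdef, hrdef]
    exact hτc'
  linarith [m1, m2, i6, f5]
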